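/- Let d ≥ 2 and g ∈ GL(d,ℝ). Suppose g = k₁·diag(α)·k₁' = k₂·diag(α)·k₂' are two singular value decompositions of g (with the same diagonal part, as the singular values are unique). Then sin∠(k₁·e₁, k₂·e₁) ≤ (α 1)/(α 0). In particular, if the series of choices made in a Cartan (KAK) decomposition of g is changed, the resulting point [k·e₁] of projective space changes by at most (α 1)/(α 0) in the sine-of-angle distance. -/

import Mathlib

open Matrix

/-- The action of a `d × d` real matrix on Euclidean `ℝ^d`. -/
noncomputable def appE {d : ℕ} (M : Matrix (Fin d) (Fin d) ℝ)
    (v : EuclideanSpace ℝ (Fin d)) : EuclideanSpace ℝ (Fin d) :=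
  Matrix.toEuclideanLin M v

/-- `IsSVD g k α k'` means `g = k · diag(α) · k'` is a singular value decomposition:
`k, k'` are orthogonal and `α` is positive and nonincreasing. -/
def IsSVD {d : ℕ} (g k : Matrix (Fin d) (Fin d) ℝ) (α : Fin d → ℝ)
    (k' : Matrix (Fin d) (Fin d) ℝ) : Prop :=
  k * kᵀ = 1 ∧ k' * k'ᵀ = 1 ∧ (∀ i, 0 < α i) ∧ Antitone α ∧
    g = k * Matrix.diagonal α * k'

/-- The sine of the angle between two vectors of Euclidean `ℝ^d`. -/
noncomputable def sinAngle {d : ℕ} (u v : EuclideanSpace ℝ (Fin d)) : ℝ :=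
  Real.sin (InnerProductGeometry.angle u v)

/-- The first standard basis vector of Euclidean `ℝ^d`. -/
noncomputable def e1 {d : ℕ} (h : 0 < d) : EuclideanSpace ℝ (Fin d) :=
  EuclideanSpace.single ⟨0, h⟩ 1

lemma inner_appE {d : ℕ} (h : 0 < d) (A B : Matrix (Fin d) (Fin d) ℝ) :
    (inner ℝ (appE A (e1 h)) (appE B (e1 h)) : ℝ) = (Aᵀ * B) ⟨0, h⟩ ⟨0, h⟩ := by
  simp [appE, e1, Matrix.toEuclideanLin, Matrix.mulVec, dotProduct,
    PiLp.inner_apply, Matrix.mul_apply, Pi.single_apply, mul_comm]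

lemma norm_appE {d : ℕ} (h : 0 < d) (A : Matrix (Fin d) (Fin d) ℝ)
    (hA : Aᵀ * A = 1) : ‖appE A (e1 h)‖ = 1 := by
  have h1 : (inner ℝ (appE A (e1 h)) (appE A (e1 h)) : ℝ) = 1 := by
    rw [inner_appE, hA]; simp
  have h2 := real_inner_self_eq_norm_mul_norm (appE A (e1 h))
  nlinarith [norm_nonneg (appE A (e1 h))]

/-- If `g = k₁·diag(α)·k₁' = k₂·diag(α)·k₂'` are two singular value decompositions of the
same matrix, then `sin∠(k₁·e₁, k₂·e₁) ≤ (α 1)/(α 0)`: the point `[k·e₁]` of projective space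
obtained from a KAK decomposition is well defined up to `(α 1)/(α 0)`. -/
theorem stmt7 (d : ℕ) (hd : 2 ≤ d) (g : Matrix (Fin d) (Fin d) ℝ)
    (k₁ k₁' k₂ k₂' : Matrix (Fin d) (Fin d) ℝ) (α : Fin d → ℝ)
    (h₁ : IsSVD g k₁ α k₁') (h₂ : IsSVD g k₂ α k₂') :
    sinAngle (appE k₁ (e1 (by omega))) (appE k₂ (e1 (by omega)))
      ≤ α ⟨1, by omega⟩ / α ⟨0, by omega⟩ := by
  obtain ⟨hk₁, hk₁', hα, hmono, hg₁⟩ := h₁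
  obtain ⟨hk₂, hk₂', -, -, hg₂⟩ := h₂
  have h0 : (0:ℕ) < d := by omega
  show sinAngle (appE k₁ (e1 h0)) (appE k₂ (e1 h0)) ≤ α ⟨1, by omega⟩ / α ⟨0, h0⟩
  set i0 : Fin d := ⟨0, h0⟩ with hi0
  set i1 : Fin d := ⟨1, by omega⟩ with hi1
  have hratio : 0 < α i1 / α i0 := div_pos (hα i1) (hα i0)
  rcases eq_or_lt_of_le (hmono (show i0 ≤ i1 by simp [hi0, hi1, Fin.le_def])) with heq | hlt
  · rw [heq, div_self (ne_of_gt (hα i0))]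
    exact Real.sin_le_one _
  · have hk₁t : k₁ᵀ * k₁ = 1 := mul_eq_one_comm.mp hk₁
    have hk₂t : k₂ᵀ * k₂ = 1 := mul_eq_one_comm.mp hk₂
    set D2 : Matrix (Fin d) (Fin d) ℝ := Matrix.diagonal (fun i => α i * α i) with hD2
    have ggT : k₁ * D2 * k₁ᵀ = k₂ * D2 * k₂ᵀ := by
      have e1' : k₁ * D2 * k₁ᵀ = g * gᵀ := by
        rw [hg₁]
        simp only [Matrix.transpose_mul, Matrix.diagonal_transpose, hD2]
        rw [show k₁ * diagonal α * k₁' * (k₁'ᵀ * (diagonal α * k₁ᵀ))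
            = k₁ * diagonal α * (k₁' * k₁'ᵀ) * (diagonal α * k₁ᵀ) by
          simp only [Matrix.mul_assoc], hk₁']
        simp only [Matrix.mul_one, Matrix.mul_assoc]
        congr 1
        rw [← Matrix.mul_assoc, Matrix.diagonal_mul_diagonal]
      have e2' : k₂ * D2 * k₂ᵀ = g * gᵀ := by
        rw [hg₂]
        simp only [Matrix.transpose_mul, Matrix.diagonal_transpose, hD2]
        rw [show k₂ * diagonal α * k₂' * (k₂'ᵀ * (diagonal α * k₂ᵀ))
            = k₂ * diagonal α * (k₂' * k₂'ᵀ) * (diagonal α * k₂ᵀ) by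
          simp only [Matrix.mul_assoc], hk₂']
        simp only [Matrix.mul_one, Matrix.mul_assoc]
        congr 1
        rw [← Matrix.mul_assoc, Matrix.diagonal_mul_diagonal]
      rw [e1', e2']
    set Q : Matrix (Fin d) (Fin d) ℝ := k₁ᵀ * k₂ with hQ
    have hcomm : D2 * Q = Q * D2 := by
      have h := congrArg (fun M => k₁ᵀ * M * k₂) ggT
      calc D2 * Q = k₁ᵀ * (k₁ * D2 * k₁ᵀ) * k₂ := by
            rw [show k₁ᵀ * (k₁ * D2 * k₁ᵀ) * k₂ = (k₁ᵀ * k₁) * D2 * (k₁ᵀ * k₂) by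
              simp only [Matrix.mul_assoc], hk₁t, Matrix.one_mul]
        _ = k₁ᵀ * (k₂ * D2 * k₂ᵀ) * k₂ := h
        _ = Q * D2 := by
            rw [show k₁ᵀ * (k₂ * D2 * k₂ᵀ) * k₂ = (k₁ᵀ * k₂) * D2 * (k₂ᵀ * k₂) by
              simp only [Matrix.mul_assoc], hk₂t, Matrix.mul_one]
    have hQcol : ∀ i : Fin d, i ≠ i0 → Q i i0 = 0 := by
      intro i hi
      have hent := congrFun (congrFun hcomm i) i0
      simp only [hD2, Matrix.diagonal_mul, Matrix.mul_diagonal] at hent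
      have hii : i1 ≤ i := by
        have : (i:ℕ) ≠ 0 := fun hc => hi (Fin.ext hc)
        simp only [hi1, Fin.le_def]
        omega
      have hαi : α i < α i0 := lt_of_le_of_lt (hmono hii) hlt
      have hpos : 0 < α i0 * α i0 - α i * α i := by nlinarith [hα i]
      have hz : Q i i0 * (α i0 * α i0 - α i * α i) = 0 := by linear_combination -hent
      rcases mul_eq_zero.mp hz with h | h
      · exact h
      · exact absurd h (ne_of_gt hpos)
    have hQQ : Qᵀ * Q = 1 := by
      rw [hQ, Matrix.transpose_mul, Matrix.transpose_transpose]
      calc k₂ᵀ * k₁ * (k₁ᵀ * k₂) = k₂ᵀ * (k₁ * k₁ᵀ) * k₂ := by simp only [Matrix.mul_assoc]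
        _ = 1 := by rw [hk₁, Matrix.mul_one, hk₂t]
    have hsum : ∑ j, Q j i0 * Q j i0 = 1 := by
      have h := congrFun (congrFun hQQ i0) i0
      simpa [Matrix.mul_apply, Matrix.transpose_apply, Matrix.one_apply] using h
    have hQ00 : Q i0 i0 * Q i0 i0 = 1 := by
      rw [Finset.sum_eq_single i0 (fun j _ hj => by rw [hQcol j hj]; ring)
        (by simp)] at hsum
      exact hsum
    have hu : ‖appE k₁ (e1 h0)‖ = 1 := norm_appE h0 k₁ hk₁t
    have hv : ‖appE k₂ (e1 h0)‖ = 1 := norm_appE h0 k₂ hk₂t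
    have hinner : (inner ℝ (appE k₁ (e1 h0)) (appE k₂ (e1 h0)) : ℝ) = Q i0 i0 :=
      inner_appE h0 k₁ k₂
    rw [sinAngle, InnerProductGeometry.angle, hinner, hu, hv, mul_one, div_one,
      Real.sin_arccos]
    have : 1 - Q i0 i0 ^ 2 = 0 := by rw [sq]; linarith
    rw [this, Real.sqrt_zero]
    exact hratio.le
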